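/- Let H be a finite simple graph possibly with loops, with adjacency matrix A(H) over GF(2) (where the diagonal entry at v is 1 iff v has a loop). If v is a looped vertex of H, and H|v denotes the graph obtained from the local complement H*v (which complements adjacency and loop-status within the closed neighborhood of v) by deleting the vertex v, then the nullity of A(H|v) equals the nullity of A(H); equivalently, the rank of A(H|v) equals the rank of A(H) minus 1. -/

import Mathlib

open Matrix

section Aux

variable {R : Type*} [Field R]

lemma LinearMap.range_prodMap' {M M₂ M₃ M₄ : Type*} [AddCommGroup M] [AddCommGroup M₂]
    [AddCommGroup M₃] [AddCommGroup M₄] [Module R M] [Module R M₂] [Module R M₃] [Module R M₄]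
    (f : M →ₗ[R] M₂) (g : M₃ →ₗ[R] M₄) :
    LinearMap.range (f.prodMap g) = (LinearMap.range f).prod (LinearMap.range g) := by
  ext ⟨x, y⟩
  simp only [LinearMap.mem_range, LinearMap.prodMap_apply, Submodule.mem_prod, Prod.mk.injEq,
    Prod.exists]
  constructor
  · rintro ⟨a, b, h1, h2⟩; exact ⟨⟨a, h1⟩, ⟨b, h2⟩⟩
  · rintro ⟨⟨a, h1⟩, ⟨b, h2⟩⟩; exact ⟨a, b, h1, h2⟩

/-- Linear equivalence between a product submodule and the product of submodules. -/
def Submodule.prodEquiv' {M N : Type*} [AddCommGroup M] [AddCommGroup N] [Module R M]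
    [Module R N] (p : Submodule R M) (q : Submodule R N) : (p.prod q) ≃ₗ[R] p × q where
  toFun x := (⟨x.1.1, x.2.1⟩, ⟨x.1.2, x.2.2⟩)
  invFun x := ⟨(x.1.1, x.2.1), x.1.2, x.2.2⟩
  map_add' _ _ := rfl
  map_smul' _ _ := rfl
  left_inv _ := rfl
  right_inv _ := rfl

lemma rank_fromBlocks_diag {n m : Type*} [Fintype n] [Fintype m] [DecidableEq n] [DecidableEq m]
    (S : Matrix n n R) (T : Matrix m m R) :
    (fromBlocks S 0 0 T).rank = S.rank + T.rank := by
  classical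
  set e := LinearEquiv.sumArrowLequivProdArrow n m R R with he
  have key : (fromBlocks S (0 : Matrix n m R) (0 : Matrix m n R) T).mulVecLin =
      (e.symm.toLinearMap ∘ₗ (S.mulVecLin.prodMap T.mulVecLin)) ∘ₗ e.toLinearMap := by
    apply LinearMap.ext
    intro x
    funext i
    cases i <;>
      simp [he, fromBlocks_mulVec, LinearEquiv.sumArrowLequivProdArrow,
        Equiv.sumArrowEquivProdArrow]
  rw [Matrix.rank, key, LinearMap.range_comp_of_range_eq_top _ (LinearEquiv.range e),
    LinearMap.range_comp, LinearEquiv.finrank_map_eq, LinearMap.range_prodMap']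
  rw [LinearEquiv.finrank_eq (Submodule.prodEquiv' _ _), Module.finrank_prod]
  rfl

lemma rank_units_mul_mul_units {n : Type*} [Fintype n] [DecidableEq n]
    (P A Q P' Q' : Matrix n n R) (hP : P' * P = 1) (hQ : Q * Q' = 1) :
    (P * A * Q).rank = A.rank := by
  apply le_antisymm
  · calc (P * A * Q).rank ≤ (P * A).rank := Matrix.rank_mul_le_left _ _
      _ ≤ A.rank := Matrix.rank_mul_le_right _ _
  · have : A = P' * (P * A * Q) * Q' := by
      rw [show P' * (P * A * Q) * Q' = (P' * P) * A * (Q * Q') by noncomm_ring, hP, hQ,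
        Matrix.one_mul, Matrix.mul_one]
    calc A.rank = (P' * (P * A * Q) * Q').rank := by rw [← this]
      _ ≤ (P' * (P * A * Q)).rank := Matrix.rank_mul_le_left _ _
      _ ≤ (P * A * Q).rank := Matrix.rank_mul_le_right _ _

end Aux

variable {V : Type*} [Fintype V] [DecidableEq V]

/- A graph with loops (but no multiple edges) on vertex set `V` is encoded by its
symmetric adjacency matrix over GF(2). -/

/-- The adjacency matrix of `H|v`: the Schur complement of `A` on the `1×1`
principal submatrix indexed by the looped vertex `v` (over GF(2), `+` is `−`),
i.e. the adjacency matrix of the graph obtained from the local complement `H*v`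
by deleting all edges incident to `v` and then deleting `v`. -/
def schurC (A : Matrix V V (ZMod 2)) (v : V) :
    Matrix {x : V // x ≠ v} {x : V // x ≠ v} (ZMod 2) :=
  fun x y => A x.1 y.1 + A x.1 v * A v y.1

/-- For a looped vertex `v` of a graph `H` (with loops allowed), the nullity of
`A(H|v)` equals the nullity of `A(H)`; equivalently `rank A(H|v) = rank A(H) − 1`. -/
theorem nullity_schurC_eq (A : Matrix V V (ZMod 2)) (hA : A.IsSymm) (v : V)
    (hv : A v v = 1) :
    Fintype.card {x : V // x ≠ v} - (schurC A v).rank = Fintype.card V - A.rank ∧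
    (schurC A v).rank + 1 = A.rank := by
  classical
  set n := {x : V // x ≠ v}
  set m := {x : V // x = v}
  haveI : Unique m := ⟨⟨⟨v, rfl⟩⟩, fun a => Subtype.ext a.2⟩
  let e : n ⊕ m ≃ V := (Equiv.sumComm n m).trans (Equiv.sumCompl (· = v))
  let b : Matrix n m (ZMod 2) := fun x _ => A x.1 v
  let c : Matrix m n (ZMod 2) := fun _ y => A v y.1
  set S := schurC A v with hS
  -- the reindexed matrix in block form
  have hB : A.submatrix e e = fromBlocks (fun x y : n => A x.1 y.1) b c 1 := by
    ext i j
    rcases i with x | ⟨x, rfl⟩ <;> rcases j with y | ⟨y, rfl⟩ <;>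
      simp [e, b, c, Matrix.one_apply, hv, Equiv.sumCompl]
    · rfl
    · rfl
    · rfl
    · exact (Matrix.one_apply_eq _).symm
  -- the factorization E * (diag S 1) * F
  let E : Matrix (n ⊕ m) (n ⊕ m) (ZMod 2) := fromBlocks 1 b 0 1
  let F : Matrix (n ⊕ m) (n ⊕ m) (ZMod 2) := fromBlocks 1 0 c 1
  have hbc : S + b * c = fun x y : n => A x.1 y.1 := by
    funext x y
    have : (b * c) x y = A x.1 v * A v y.1 := by
      rw [Matrix.mul_apply, Fintype.sum_unique]
    show S x y + (b * c) x y = A x.1 y.1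
    rw [this, hS, schurC, add_assoc, CharTwo.add_self_eq_zero, add_zero]
  have hfact : E * fromBlocks S 0 0 1 * F = A.submatrix e e := by
    rw [hB]
    have h1 : E * fromBlocks S 0 0 1 = fromBlocks S b 0 1 := by
      simp [E, Matrix.fromBlocks_multiply]
    rw [h1]
    have h2 : fromBlocks S b (0 : Matrix m n (ZMod 2)) 1 * F =
        fromBlocks (S + b * c) b c 1 := by
      simp [F, Matrix.fromBlocks_multiply]
    rw [h2, hbc]
  have hb2 : b + b = 0 := by ext i j; exact CharTwo.add_self_eq_zero _
  have hc2 : c + c = 0 := by ext i j; exact CharTwo.add_self_eq_zero _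
  have hE : E * E = 1 := by
    simp [E, Matrix.fromBlocks_multiply, hb2, ← Matrix.fromBlocks_one]
  have hF : F * F = 1 := by
    simp [F, Matrix.fromBlocks_multiply, hc2, ← Matrix.fromBlocks_one]
  have hrank : A.rank = S.rank + 1 := by
    have h1 : (A.submatrix e e).rank = A.rank := Matrix.rank_submatrix A e e
    have h2 : (fromBlocks S (0 : Matrix n m (ZMod 2)) (0 : Matrix m n (ZMod 2))
        (1 : Matrix m m (ZMod 2))).rank = S.rank + 1 := by
      rw [rank_fromBlocks_diag, Matrix.rank_one]
      congr 1
    rw [← h1, ← hfact, rank_units_mul_mul_units E _ F E F hE hF, h2]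
  have hcard : Fintype.card V = Fintype.card n + 1 := by
    rw [← Fintype.card_congr e, Fintype.card_sum, Fintype.card_subtype_eq v]
  have hn : Fintype.card {x : V // x ≠ v} = Fintype.card n := rfl
  have hs : (schurC A v).rank = S.rank := rfl
  refine ⟨?_, by rw [hs]; omega⟩
  rw [hn, hs, hrank, hcard]
  omega
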